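/- arXiv:1903.02813 — 2 statements merged into one kernel-verified Lean document; each statement's English description precedes it below -/
import Mathlib

section
/- For all real numbers a < b < c, the operators on the Fock space 𝓕 satisfy the join relations E_{[a,c)} = t·E_{[a,b)} ∘ E_{[b,c)} − t⁻¹·E_{[b,c)} ∘ E_{[a,b)} and F_{[a,c)} = t⁻¹·F_{[b,c)} ∘ F_{[a,b)} − t·F_{[a,b)} ∘ F_{[b,c)} as K-linear endomorphisms of 𝓕. -/
noncomputable section
open Function
open scoped Classical

/-- The `ℕ`-valued indicator function of the interval `[a, b)`. -/
def ind (a b : ℝ) : ℝ → ℕ := (Set.Ico a b).indicator fun _ => 1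

/-- A real pyramid: a function `p : ℝ → ℕ` vanishing outside a bounded set, maximal at `0`,
nondecreasing on `(-∞, 0]`, nonincreasing on `[0, ∞)`, right-continuous and piecewise
constant with finitely many discontinuities, and with jumps of size at most 1
(`p₋(x)` is the left limit of `p` at `x`). -/
def IsRealPyramid (p : ℝ → ℕ) : Prop :=
  (∃ M : ℝ, ∀ x : ℝ, M ≤ |x| → p x = 0) ∧
  (∀ x, p x ≤ p 0) ∧
  (∀ ⦃x y : ℝ⦄, x ≤ y → y ≤ 0 → p x ≤ p y) ∧
  (∀ ⦃x y : ℝ⦄, 0 ≤ x → x ≤ y → p y ≤ p x) ∧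
  (∀ x, ContinuousWithinAt p (Set.Ici x) x) ∧
  {x : ℝ | ¬ ContinuousAt p x}.Finite ∧
  (∀ x, |(p x : ℤ) - ((Function.leftLim p x : ℕ) : ℤ)| ≤ 1)

/-- The interval `[a, b)` is addable for `p` if `p + 1_{[a,b)}` is again a real pyramid. -/
def Addable (p : ℝ → ℕ) (a b : ℝ) : Prop := IsRealPyramid (fun x => p x + ind a b x)

/-- The interval `[a, b)` is removable for `p` if `p ≥ 1` on `[a, b)` and `p − 1_{[a,b)}`
is again a real pyramid. -/
def Removable (p : ℝ → ℕ) (a b : ℝ) : Prop :=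
  (∀ x ∈ Set.Ico a b, 1 ≤ p x) ∧ IsRealPyramid (fun x => p x - ind a b x)

/-- `n_J(p)`: `1` if `J = [a,b)` is addable for `p`, `−1` if removable, `0` otherwise. -/
def nJ (p : ℝ → ℕ) (a b : ℝ) : ℤ :=
  if Addable p a b then 1 else if Removable p a b then -1 else 0

/-- The base field `K = ℚ(t)`. -/
abbrev K : Type := RatFunc ℚ

/-- The variable `t ∈ K` (playing the role of `υ^{1/2}`). -/
def tK : K := RatFunc.X

/-- The quantum parameter `v := t²`. -/
def vK : K := tK ^ 2

/-- The type of real pyramids. -/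
def Pyr : Type := {p : ℝ → ℕ // IsRealPyramid p}

/-- The Fock space: the `K`-vector space with basis `|p⟩` indexed by real pyramids. -/
abbrev Fock : Type := Pyr →₀ K

/-- `E_J |p⟩ = −t·(−v)^{p(b)−p(a)} |p − 1_J⟩` if `J = [a,b)` is removable for `p`,
and `0` otherwise. -/
def Evec (a b : ℝ) (p : Pyr) : Fock :=
  if h : Removable p.1 a b then
    Finsupp.single ⟨fun x => p.1 x - ind a b x, h.2⟩
      (-tK * (-vK) ^ ((p.1 b : ℤ) - (p.1 a : ℤ)))
  else 0

/-- `F_J |p⟩ = t·(−v)^{p(a)−p(b)} |p + 1_J⟩` if `J = [a,b)` is addable for `p`,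
and `0` otherwise. -/
def Fvec (a b : ℝ) (p : Pyr) : Fock :=
  if h : Addable p.1 a b then
    Finsupp.single ⟨fun x => p.1 x + ind a b x, h⟩
      (tK * (-vK) ^ ((p.1 a : ℤ) - (p.1 b : ℤ)))
  else 0

/-- The `K`-linear operator `E_J` on the Fock space. -/
def Eop (a b : ℝ) : Fock →ₗ[K] Fock :=
  Finsupp.lsum K fun p => LinearMap.toSpanSingleton K Fock (Evec a b p)

/-- The `K`-linear operator `F_J` on the Fock space. -/
def Fop (a b : ℝ) : Fock →ₗ[K] Fock :=
  Finsupp.lsum K fun p => LinearMap.toSpanSingleton K Fock (Fvec a b p)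

/-- The `K`-linear operator `K_J` on the Fock space: `K_J |p⟩ = v^{n_J(p)} |p⟩`. -/
def Kop (a b : ℝ) : Fock →ₗ[K] Fock :=
  Finsupp.lsum K fun p =>
    LinearMap.toSpanSingleton K Fock (Finsupp.single p (vK ^ (nJ p.1 a b)))

/-- The `K`-linear operator `K_J⁻¹` on the Fock space: `K_J⁻¹ |p⟩ = v^{−n_J(p)} |p⟩`. -/
def Kinvop (a b : ℝ) : Fock →ₗ[K] Fock :=
  Finsupp.lsum K fun p =>
    LinearMap.toSpanSingleton K Fock (Finsupp.single p (vK ^ (-nJ p.1 a b)))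

/-- `Pp p x`: at `x ≤ 0` an up-jump, at `x > 0` continuity from the left. -/
def Pp (p : ℝ → ℕ) (x : ℝ) : Prop :=
  if x ≤ 0 then p x = leftLim p x + 1 else p x = leftLim p x

/-- `Pm p x`: at `x ≤ 0` continuity from the left, at `x > 0` a down-jump. -/
def Pm (p : ℝ → ℕ) (x : ℝ) : Prop :=
  if x ≤ 0 then p x = leftLim p x else p x + 1 = leftLim p x

lemma Pp_Pm_not_both {p : ℝ → ℕ} {x : ℝ} (h1 : Pp p x) (h2 : Pm p x) : False := by
  unfold Pp Pm at *; split_ifs at h1 h2 <;> omega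

lemma ind_apply (a b z : ℝ) : ind a b z = if a ≤ z ∧ z < b then 1 else 0 := by
  simp [ind, Set.indicator_apply, Set.mem_Ico]

lemma ind_split {a b c : ℝ} (hab : a < b) (hbc : b < c) (z : ℝ) :
    ind a c z = ind a b z + ind b c z := by
  simp only [ind_apply]
  rcases le_or_gt a z with ha | ha
  · rcases lt_or_ge z b with hb | hb
    · rw [if_pos ⟨ha, hb.trans hbc⟩, if_pos ⟨ha, hb⟩, if_neg (by intro h; linarith [h.1])]
    · rcases lt_or_ge z c with hc | hc
      · rw [if_pos ⟨ha, hc⟩, if_neg (by intro h; linarith [h.2]), if_pos ⟨hb, hc⟩]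
      · rw [if_neg (by intro h; linarith [h.2]), if_neg (by intro h; linarith [h.2]),
          if_neg (by intro h; linarith [h.2])]
  · rw [if_neg (by intro h; linarith [h.1]), if_neg (by intro h; linarith [h.1]),
      if_neg (by intro h; linarith [hab, h.1])]

lemma leftLim_of_eventually_const {f : ℝ → ℕ} {x : ℝ} {v : ℕ} {z0 : ℝ} (h0 : z0 < x)
    (h : ∀ z, z0 < z → z < x → f z = v) : leftLim f x = v := by
  apply leftLim_eq_of_tendsto
  apply Filter.Tendsto.congr' _ (tendsto_const_nhds (x := v))
  filter_upwards [Ioo_mem_nhdsLT_of_mem (⟨h0, le_refl x⟩ : x ∈ Set.Ioc z0 x)] with z hz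
  exact (h z hz.1 hz.2).symm

lemma exists_leftLim_eq {p : ℝ → ℕ} (hp : IsRealPyramid p) {x : ℝ} (w : ℝ) (hw : w < x) :
    ∃ z0, w < z0 ∧ z0 < x ∧ ∀ z, z0 ≤ z → z < x → p z = leftLim p x := by
  obtain ⟨-, hmax, hmono, hanti, -, -, -⟩ := hp
  rcases le_or_gt x 0 with hx | hx
  · have hne : (p '' Set.Ioo w x).Nonempty :=
      ⟨p ((w + x) / 2), ⟨(w + x) / 2, ⟨by linarith, by linarith⟩, rfl⟩⟩
    have hbdd : BddAbove (p '' Set.Ioo w x) := ⟨p 0, by rintro n ⟨z, -, rfl⟩; exact hmax z⟩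
    obtain ⟨z0, hz0mem, hz0⟩ := Nat.sSup_mem hne hbdd
    have hconst : ∀ z, z0 ≤ z → z < x → p z = p z0 := by
      intro z h1 h2
      have h3 : p z0 ≤ p z := hmono h1 (by linarith)
      have h4 : p z ≤ sSup (p '' Set.Ioo w x) :=
        le_csSup hbdd ⟨z, ⟨lt_of_lt_of_le hz0mem.1 h1, h2⟩, rfl⟩
      omega
    have hll : leftLim p x = p z0 :=
      leftLim_of_eventually_const hz0mem.2 fun z h1 h2 => hconst z h1.le h2
    exact ⟨z0, hz0mem.1, hz0mem.2, fun z h1 h2 => by rw [hconst z h1 h2, hll]⟩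
  · set w' := max w 0 with hw'
    have hw'x : w' < x := max_lt hw hx
    have hne : (p '' Set.Ioo w' x).Nonempty :=
      ⟨p ((w' + x) / 2), ⟨(w' + x) / 2, ⟨by linarith, by linarith⟩, rfl⟩⟩
    obtain ⟨z0, hz0mem, hz0⟩ := Nat.sInf_mem hne
    have hconst : ∀ z, z0 ≤ z → z < x → p z = p z0 := by
      intro z h1 h2
      have h0 : (0 : ℝ) ≤ z0 := le_trans (le_max_right w 0) hz0mem.1.le
      have h3 : p z ≤ p z0 := hanti h0 h1
      have h4 : sInf (p '' Set.Ioo w' x) ≤ p z :=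
        Nat.sInf_le ⟨z, ⟨lt_of_lt_of_le hz0mem.1 h1, h2⟩, rfl⟩
      omega
    have hll : leftLim p x = p z0 :=
      leftLim_of_eventually_const hz0mem.2 fun z h1 h2 => hconst z h1.le h2
    exact ⟨z0, lt_of_le_of_lt (le_max_left w 0) hz0mem.1, hz0mem.2,
      fun z h1 h2 => by rw [hconst z h1 h2, hll]⟩

lemma le_leftLim_of_nonpos {p : ℝ → ℕ} (hp : IsRealPyramid p) {x z : ℝ} (hx : x ≤ 0)
    (hz : z < x) : p z ≤ leftLim p x := by
  obtain ⟨z0, h1, h2, h3⟩ := exists_leftLim_eq hp z hz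
  rw [← h3 z0 le_rfl h2]
  exact hp.2.2.1 h1.le (by linarith)

lemma leftLim_le_of_nonpos {p : ℝ → ℕ} (hp : IsRealPyramid p) {x : ℝ} (hx : x ≤ 0) :
    leftLim p x ≤ p x := by
  obtain ⟨z0, h1, h2, h3⟩ := exists_leftLim_eq hp (x - 1) (by linarith)
  rw [← h3 z0 le_rfl h2]
  exact hp.2.2.1 h2.le hx

lemma leftLim_le_of_pos {p : ℝ → ℕ} (hp : IsRealPyramid p) {x z : ℝ} (hz0 : 0 ≤ z)
    (hzx : z < x) : leftLim p x ≤ p z := by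
  obtain ⟨z0, h1, h2, h3⟩ := exists_leftLim_eq hp z hzx
  rw [← h3 z0 le_rfl h2]
  exact hp.2.2.2.1 hz0 h1.le

lemma le_leftLim_of_pos {p : ℝ → ℕ} (hp : IsRealPyramid p) {x : ℝ} (hx : 0 < x) :
    p x ≤ leftLim p x := by
  obtain ⟨z0, h1, h2, h3⟩ := exists_leftLim_eq hp 0 hx
  rw [← h3 z0 le_rfl h2]
  exact hp.2.2.2.1 (le_trans (by linarith : (0:ℝ) ≤ 0) h1.le) h2.le

lemma one_le_leftLim {p : ℝ → ℕ} (hp : IsRealPyramid p) {w x : ℝ} (hw : w < x)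
    (h : ∀ z, w < z → z < x → 1 ≤ p z) : 1 ≤ leftLim p x := by
  obtain ⟨z0, h1, h2, h3⟩ := exists_leftLim_eq hp w hw
  rw [← h3 z0 le_rfl h2]; exact h z0 h1 h2

lemma leftLim_comp {p : ℝ → ℕ} (hp : IsRealPyramid p) {x : ℝ} (w : ℝ) (hw : w < x)
    (g : ℕ → ℕ) {f : ℝ → ℕ} (hf : ∀ z, w < z → z < x → f z = g (p z)) :
    leftLim f x = g (leftLim p x) := by
  obtain ⟨z0, h1, h2, h3⟩ := exists_leftLim_eq hp w hw
  exact leftLim_of_eventually_const h2 fun z hz1 hz2 => by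
    rw [hf z (h1.trans hz1) hz2, h3 z hz1.le hz2]

lemma jump_bound {p : ℝ → ℕ} (hp : IsRealPyramid p) (x : ℝ) :
    p x ≤ leftLim p x + 1 ∧ leftLim p x ≤ p x + 1 := by
  have := hp.2.2.2.2.2.2 x
  rw [abs_le] at this
  omega
lemma rc_of_locally_const {f : ℝ → ℕ} {x d : ℝ} (hd : x < d)
    (h : ∀ z, x ≤ z → z < d → f z = f x) : ContinuousWithinAt f (Set.Ici x) x := by
  have hm : Set.Ico x d ∈ nhdsWithin x (Set.Ici x) := Ico_mem_nhdsGE_of_mem ⟨le_rfl, hd⟩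
  rw [ContinuousWithinAt, show nhds (f x) = pure (f x) from congrFun (nhds_discrete ℕ) _, Filter.tendsto_pure]
  filter_upwards [hm] with z hz
  exact h z hz.1 hz.2

lemma rc_to_locally_const {f : ℝ → ℕ} {x : ℝ} (h : ContinuousWithinAt f (Set.Ici x) x) :
    ∃ d, x < d ∧ ∀ z, x ≤ z → z < d → f z = f x := by
  rw [ContinuousWithinAt, show nhds (f x) = pure (f x) from congrFun (nhds_discrete ℕ) _, Filter.tendsto_pure] at h
  rw [Filter.Eventually, mem_nhdsGE_iff_exists_Ico_subset] at h
  obtain ⟨u, hu, hsub⟩ := h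
  exact ⟨u, hu, fun z h1 h2 => hsub ⟨h1, h2⟩⟩

lemma ca_iff {f : ℝ → ℕ} {x : ℝ} : ContinuousAt f x ↔ ∀ᶠ z in nhds x, f z = f x := by
  rw [ContinuousAt, show nhds (f x) = pure (f x) from congrFun (nhds_discrete ℕ) _, Filter.tendsto_pure]

lemma ind_right_const (a b z : ℝ) :
    ∃ d, z < d ∧ ∀ w, z ≤ w → w < d → ind a b w = ind a b z := by
  rcases lt_or_ge z a with h | h
  · exact ⟨a, h, fun w h1 h2 => by
      rw [ind_apply, ind_apply, if_neg (fun hc => by linarith [hc.1]),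
        if_neg (fun hc => by linarith [hc.1])]⟩
  · rcases lt_or_ge z b with h' | h'
    · exact ⟨b, h', fun w h1 h2 => by
        rw [ind_apply, ind_apply, if_pos ⟨le_trans h h1, h2⟩, if_pos ⟨h, h'⟩]⟩
    · exact ⟨z + 1, by linarith, fun w h1 h2 => by
        rw [ind_apply, ind_apply, if_neg (fun hc => by linarith [hc.2]),
          if_neg (fun hc => by linarith [hc.2])]⟩

lemma ind_eventually_const {a b z : ℝ} (hza : z ≠ a) (hzb : z ≠ b) :
    ∀ᶠ w in nhds z, ind a b w = ind a b z := by
  rcases lt_trichotomy z a with h | h | h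
  · filter_upwards [Iio_mem_nhds h] with w hw
    rw [ind_apply, ind_apply, if_neg (fun hc => by exact absurd hc.1 (not_le.mpr hw)),
      if_neg (fun hc => by linarith [hc.1])]
  · exact absurd h hza
  · rcases lt_trichotomy z b with h' | h' | h'
    · filter_upwards [Ioo_mem_nhds h h'] with w hw
      rw [ind_apply, ind_apply, if_pos ⟨hw.1.le, hw.2⟩, if_pos ⟨h.le, h'⟩]
    · exact absurd h' hzb
    · filter_upwards [Ioi_mem_nhds h'] with w hw
      rw [ind_apply, ind_apply, if_neg (fun hc => by linarith [hc.2, Set.mem_Ioi.mp hw]),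
        if_neg (fun hc => by linarith [hc.2])]
lemma removable_iff {p : ℝ → ℕ} (hp : IsRealPyramid p) {x y : ℝ} (hxy : x < y) :
    Removable p x y ↔ (∀ z ∈ Set.Ico x y, 1 ≤ p z) ∧ Pp p x ∧ Pm p y := by
  have hind : ∀ z, ind x y z = if x ≤ z ∧ z < y then 1 else 0 := ind_apply x y
  have hindx : ind x y x = 1 := by rw [hind, if_pos ⟨le_rfl, hxy⟩]
  have hindy : ind x y y = 0 := by rw [hind, if_neg (fun hc => lt_irrefl y hc.2)]
  have hLqx : leftLim (fun u => p u - ind x y u) x = leftLim p x := by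
    apply leftLim_comp hp (x - 1) (by linarith) id
    intro z h1 h2
    rw [hind, if_neg (fun hc => absurd hc.1 (not_le.mpr h2))]; simp
  have hLqy : leftLim (fun u => p u - ind x y u) y = leftLim p y - 1 := by
    apply leftLim_comp hp x hxy (· - 1)
    intro z h1 h2
    rw [hind, if_pos ⟨h1.le, h2⟩]
  have hmax := hp.2.1
  have hmono := hp.2.2.1
  have hanti := hp.2.2.2.1
  constructor
  · rintro ⟨h1, hq⟩
    have h1x : 1 ≤ p x := h1 x ⟨le_rfl, hxy⟩
    have h1L : 1 ≤ leftLim p y :=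
      one_le_leftLim hp hxy fun z hz1 hz2 => h1 z ⟨hz1.le, hz2⟩
    refine ⟨h1, ?_, ?_⟩
    · unfold Pp
      split_ifs with hx
      · have m1 := leftLim_le_of_nonpos hq hx
        have m2 := (jump_bound hp x).1
        simp only [hLqx, hindx] at m1
        omega
      · have m1 := (jump_bound hq x).2
        have m2 := le_leftLim_of_pos hp (not_le.mp hx)
        simp only [hLqx, hindx] at m1
        omega
    · unfold Pm
      split_ifs with hy
      · have m1 := (jump_bound hq y).1
        have m2 := leftLim_le_of_nonpos hp hy
        simp only [hLqy, hindy] at m1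
        omega
      · have m1 := le_leftLim_of_pos hq (not_le.mp hy)
        have m2 := (jump_bound hp y).2
        simp only [hLqy, hindy] at m1
        omega
  · rintro ⟨h1, hPp, hPm⟩
    have h1x : 1 ≤ p x := h1 x ⟨le_rfl, hxy⟩
    have h1L : 1 ≤ leftLim p y :=
      one_le_leftLim hp hxy fun z hz1 hz2 => h1 z ⟨hz1.le, hz2⟩
    unfold Pp at hPp; unfold Pm at hPm
    refine ⟨h1, ⟨?_, ?_, ?_, ?_, ?_, ?_, ?_⟩⟩
    · -- bounded
      obtain ⟨M, hM⟩ := hp.1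
      exact ⟨M, fun z hz => by simp only [hM z hz, Nat.zero_sub]⟩
    · -- max at 0
      intro z
      simp only []
      by_cases h0 : x ≤ 0 ∧ 0 < y
      · have e0 : ind x y 0 = 1 := by rw [hind, if_pos h0]
        have h10 : 1 ≤ p 0 := h1 0 ⟨h0.1, h0.2⟩
        rw [e0, hind z]
        split_ifs with hz
        · have := hmax z; omega
        · push_neg at hz
          rw [if_pos h0.1] at hPp
          rcases lt_or_ge z x with hzx | hzx
          · have m1 := le_leftLim_of_nonpos hp h0.1 hzx
            have m2 := hmax x
            omega
          · have hyz : y ≤ z := hz hzx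
            rw [if_neg (not_le.mpr h0.2)] at hPm
            have m1 : p z ≤ p y := hanti h0.2.le hyz
            have m2 : leftLim p y ≤ p 0 := leftLim_le_of_pos hp le_rfl h0.2
            omega
      · have e0 : ind x y 0 = 0 := by rw [hind, if_neg h0]
        rw [e0, hind z]
        have := hmax z
        split_ifs <;> omega
    · -- nondecreasing on (-∞,0]
      intro z w hzw hw0
      simp only []
      rw [hind z, hind w]
      have hmzw := hmono hzw hw0
      by_cases hz : x ≤ z ∧ z < y <;> by_cases hw : x ≤ w ∧ w < y
      · rw [if_pos hz, if_pos hw]; omega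
      · rw [if_pos hz, if_neg hw]
        push_neg at hw
        have hyw : y ≤ w := hw (le_trans hz.1 hzw)
        have hy0 : y ≤ 0 := le_trans hyw hw0
        rw [if_pos hy0] at hPm
        have m1 : p z ≤ leftLim p y := le_leftLim_of_nonpos hp hy0 hz.2
        have m2 : p y ≤ p w := hmono hyw hw0
        omega
      · rw [if_neg hz, if_pos hw]
        push_neg at hz
        have hzx : z < x := by
          by_contra hc
          exact absurd (hz (not_lt.mp hc)) (not_le.mpr (lt_of_le_of_lt hzw hw.2))
        have hx0 : x ≤ 0 := le_trans hw.1 hw0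
        rw [if_pos hx0] at hPp
        have m1 : p z ≤ leftLim p x := le_leftLim_of_nonpos hp hx0 hzx
        have m2 : p x ≤ p w := hmono hw.1 hw0
        omega
      · rw [if_neg hz, if_neg hw]; omega
    · -- nonincreasing on [0,∞)
      intro z w h0z hzw
      simp only []
      rw [hind z, hind w]
      have hmzw := hanti h0z hzw
      by_cases hz : x ≤ z ∧ z < y <;> by_cases hw : x ≤ w ∧ w < y
      · rw [if_pos hz, if_pos hw]; omega
      · rw [if_pos hz, if_neg hw]
        push_neg at hw
        have hyw : y ≤ w := hw (le_trans hz.1 hzw)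
        have hy0 : 0 < y := lt_of_le_of_lt h0z hz.2
        rw [if_neg (not_le.mpr hy0)] at hPm
        have m1 : leftLim p y ≤ p z := leftLim_le_of_pos hp h0z hz.2
        have m2 : p w ≤ p y := hanti hy0.le hyw
        omega
      · rw [if_neg hz, if_pos hw]
        push_neg at hz
        have hzx : z < x := by
          by_contra hc
          exact absurd (hz (not_lt.mp hc)) (not_le.mpr (lt_of_le_of_lt hzw hw.2))
        have m1 : p w ≤ p z := hanti h0z hzw
        omega
      · rw [if_neg hz, if_neg hw]; omega
    · -- right continuity
      intro z
      obtain ⟨d1, hd1, hc1⟩ := rc_to_locally_const (hp.2.2.2.2.1 z)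
      obtain ⟨d2, hd2, hc2⟩ := ind_right_const x y z
      apply rc_of_locally_const (lt_min hd1 hd2)
      intro w hw1 hw2
      rw [hc1 w hw1 (lt_of_lt_of_le hw2 (min_le_left _ _)),
        hc2 w hw1 (lt_of_lt_of_le hw2 (min_le_right _ _))]
    · -- finitely many discontinuities
      apply Set.Finite.subset (Set.Finite.union hp.2.2.2.2.2.1 (Set.toFinite {x, y}))
      intro z hz
      by_contra hc
      simp only [Set.mem_union, Set.mem_setOf_eq, Set.mem_insert_iff,
        Set.mem_singleton_iff, not_or] at hc
      apply hz
      rw [ca_iff]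
      have hcp : ∀ᶠ w in nhds z, p w = p z := ca_iff.mp (not_not.mp hc.1)
      have hci : ∀ᶠ w in nhds z, ind x y w = ind x y z :=
        ind_eventually_const hc.2.1 hc.2.2
      filter_upwards [hcp, hci] with w hw1 hw2
      simp only [hw1, hw2]
    · -- jump bound
      intro z
      rw [abs_le]
      rcases lt_trichotomy z x with hzx | hzx | hzx
      · have hL : leftLim (fun u => p u - ind x y u) z = leftLim p z := by
          apply leftLim_comp hp (z - 1) (by linarith) id
          intro u h1 h2
          rw [hind, if_neg (fun hc => by linarith [hc.1])]; simp
        have e : ind x y z = 0 := by rw [hind, if_neg (fun hc => by linarith [hc.1])]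
        simp only [hL, e]
        have := jump_bound hp z
        omega
      · subst hzx
        simp only [hLqx, hindx]
        split_ifs at hPp <;> omega
      · rcases lt_trichotomy z y with hzy | hzy | hzy
        · have hL : leftLim (fun u => p u - ind x y u) z = leftLim p z - 1 := by
            apply leftLim_comp hp x hzx (· - 1)
            intro u h1 h2
            rw [hind, if_pos ⟨h1.le, lt_trans h2 hzy⟩]
          have e : ind x y z = 1 := by rw [hind, if_pos ⟨le_of_lt hzx, hzy⟩]
          have h1z : 1 ≤ p z := h1 z ⟨hzx.le, hzy⟩
          have h1Lz : 1 ≤ leftLim p z :=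
            one_le_leftLim hp hzx fun u h1' h2' => h1 u ⟨h1'.le, lt_trans h2' hzy⟩
          simp only [hL, e]
          have := jump_bound hp z
          omega
        · subst hzy
          simp only [hLqy, hindy]
          split_ifs at hPm <;> omega
        · have hL : leftLim (fun u => p u - ind x y u) z = leftLim p z := by
            apply leftLim_comp hp y hzy id
            intro u h1 h2
            rw [hind, if_neg (fun hc => by linarith [hc.2])]; simp
          have e : ind x y z = 0 := by rw [hind, if_neg (fun hc => by linarith [hc.2])]
          simp only [hL, e]
          have := jump_bound hp z
          omega
lemma addable_iff {p : ℝ → ℕ} (hp : IsRealPyramid p) {x y : ℝ} (hxy : x < y) :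
    Addable p x y ↔ Pm p x ∧ Pp p y := by
  have hind : ∀ z, ind x y z = if x ≤ z ∧ z < y then 1 else 0 := ind_apply x y
  have hindx : ind x y x = 1 := by rw [hind, if_pos ⟨le_rfl, hxy⟩]
  have hindy : ind x y y = 0 := by rw [hind, if_neg (fun hc => lt_irrefl y hc.2)]
  have hLqx : leftLim (fun u => p u + ind x y u) x = leftLim p x := by
    apply leftLim_comp hp (x - 1) (by linarith) id
    intro z h1 h2
    rw [hind, if_neg (fun hc => absurd hc.1 (not_le.mpr h2))]; simp
  have hLqy : leftLim (fun u => p u + ind x y u) y = leftLim p y + 1 := by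
    apply leftLim_comp hp x hxy (· + 1)
    intro z h1 h2
    rw [hind, if_pos ⟨h1.le, h2⟩]
  have hmax := hp.2.1
  have hmono := hp.2.2.1
  have hanti := hp.2.2.2.1
  constructor
  · intro hq
    constructor
    · unfold Pm
      split_ifs with hx
      · have m1 := (jump_bound hq x).1
        have m2 := leftLim_le_of_nonpos hp hx
        simp only [hLqx, hindx] at m1
        omega
      · have m1 := le_leftLim_of_pos hq (not_le.mp hx)
        have m2 := (jump_bound hp x).2
        simp only [hLqx, hindx] at m1
        omega
    · unfold Pp
      split_ifs with hy
      · have m1 := leftLim_le_of_nonpos hq hy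
        have m2 := (jump_bound hp y).1
        simp only [hLqy, hindy] at m1
        omega
      · have m1 := (jump_bound hq y).2
        have m2 := le_leftLim_of_pos hp (not_le.mp hy)
        simp only [hLqy, hindy] at m1
        omega
  · rintro ⟨hPm, hPp⟩
    unfold Pm at hPm; unfold Pp at hPp
    refine ⟨?_, ?_, ?_, ?_, ?_, ?_, ?_⟩
    · -- bounded
      obtain ⟨M, hM⟩ := hp.1
      refine ⟨max M (max |x| |y|) + 1, fun z hz => ?_⟩
      have hMz : M ≤ |z| := by
        have := le_max_left M (max |x| |y|); linarith
      have hxyz : ¬(x ≤ z ∧ z < y) := by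
        rintro ⟨hc1, hc2⟩
        have hx1 : |x| ≤ max M (max |x| |y|) := le_trans (le_max_left _ _) (le_max_right _ _)
        have hy1 : |y| ≤ max M (max |x| |y|) := le_trans (le_max_right _ _) (le_max_right _ _)
        rcases le_or_gt 0 z with h0 | h0
        · rw [abs_of_nonneg h0] at hz
          have : y ≤ |y| := le_abs_self y
          linarith
        · rw [abs_of_neg h0] at hz
          have : -x ≤ |x| := neg_le_abs x
          linarith
      simp only [hM z hMz, hind, if_neg hxyz]
    · -- max at 0
      intro z
      simp only []
      rw [hind z, hind 0]
      by_cases h0 : x ≤ 0 ∧ 0 < y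
      · rw [if_pos h0]
        have := hmax z
        split_ifs <;> omega
      · rw [if_neg h0]
        split_ifs with hz
        · rcases le_or_gt y 0 with hy0 | hy0
          · rw [if_pos hy0] at hPp
            have m1 : p z ≤ leftLim p y := le_leftLim_of_nonpos hp hy0 hz.2
            have m2 := hmax y
            omega
          · have hx0 : ¬ x ≤ 0 := fun hc => h0 ⟨hc, hy0⟩
            rw [if_neg hx0] at hPm
            push_neg at hx0
            have m1 : p z ≤ p x := hanti hx0.le hz.1
            have m2 : leftLim p x ≤ p 0 := leftLim_le_of_pos hp le_rfl hx0
            omega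
        · have := hmax z; omega
    · -- nondecreasing on (-∞,0]
      intro z w hzw hw0
      simp only []
      rw [hind z, hind w]
      have hmzw := hmono hzw hw0
      by_cases hz : x ≤ z ∧ z < y <;> by_cases hw : x ≤ w ∧ w < y
      · rw [if_pos hz, if_pos hw]; omega
      · rw [if_pos hz, if_neg hw]
        push_neg at hw
        have hyw : y ≤ w := hw (le_trans hz.1 hzw)
        have hy0 : y ≤ 0 := le_trans hyw hw0
        rw [if_pos hy0] at hPp
        have m1 : p z ≤ leftLim p y := le_leftLim_of_nonpos hp hy0 hz.2
        have m2 : p y ≤ p w := hmono hyw hw0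
        omega
      · rw [if_neg hz, if_pos hw]; omega
      · rw [if_neg hz, if_neg hw]; omega
    · -- nonincreasing on [0,∞)
      intro z w h0z hzw
      simp only []
      rw [hind z, hind w]
      have hmzw := hanti h0z hzw
      by_cases hz : x ≤ z ∧ z < y <;> by_cases hw : x ≤ w ∧ w < y
      · rw [if_pos hz, if_pos hw]; omega
      · rw [if_pos hz, if_neg hw]; omega
      · rw [if_neg hz, if_pos hw]
        push_neg at hz
        have hzx : z < x := by
          by_contra hc
          exact absurd (hz (not_lt.mp hc)) (not_le.mpr (lt_of_le_of_lt hzw hw.2))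
        have h0x : 0 < x := lt_of_le_of_lt h0z hzx
        rw [if_neg (not_le.mpr h0x)] at hPm
        have m1 : leftLim p x ≤ p z := leftLim_le_of_pos hp h0z hzx
        have m2 : p w ≤ p x := hanti h0x.le hw.1
        omega
      · rw [if_neg hz, if_neg hw]; omega
    · -- right continuity
      intro z
      obtain ⟨d1, hd1, hc1⟩ := rc_to_locally_const (hp.2.2.2.2.1 z)
      obtain ⟨d2, hd2, hc2⟩ := ind_right_const x y z
      apply rc_of_locally_const (lt_min hd1 hd2)
      intro w hw1 hw2
      rw [hc1 w hw1 (lt_of_lt_of_le hw2 (min_le_left _ _)),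
        hc2 w hw1 (lt_of_lt_of_le hw2 (min_le_right _ _))]
    · -- finitely many discontinuities
      apply Set.Finite.subset (Set.Finite.union hp.2.2.2.2.2.1 (Set.toFinite {x, y}))
      intro z hz
      by_contra hc
      simp only [Set.mem_union, Set.mem_setOf_eq, Set.mem_insert_iff,
        Set.mem_singleton_iff, not_or] at hc
      apply hz
      rw [ca_iff]
      have hcp : ∀ᶠ w in nhds z, p w = p z := ca_iff.mp (not_not.mp hc.1)
      have hci : ∀ᶠ w in nhds z, ind x y w = ind x y z :=
        ind_eventually_const hc.2.1 hc.2.2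
      filter_upwards [hcp, hci] with w hw1 hw2
      simp only [hw1, hw2]
    · -- jump bound
      intro z
      rw [abs_le]
      rcases lt_trichotomy z x with hzx | hzx | hzx
      · have hL : leftLim (fun u => p u + ind x y u) z = leftLim p z := by
          apply leftLim_comp hp (z - 1) (by linarith) id
          intro u h1 h2
          rw [hind, if_neg (fun hc => by linarith [hc.1])]; simp
        have e : ind x y z = 0 := by rw [hind, if_neg (fun hc => by linarith [hc.1])]
        simp only [hL, e]
        have := jump_bound hp z
        omega
      · subst hzx
        simp only [hLqx, hindx]
        split_ifs at hPm <;> omega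
      · rcases lt_trichotomy z y with hzy | hzy | hzy
        · have hL : leftLim (fun u => p u + ind x y u) z = leftLim p z + 1 := by
            apply leftLim_comp hp x hzx (· + 1)
            intro u h1 h2
            rw [hind, if_pos ⟨h1.le, lt_trans h2 hzy⟩]
          have e : ind x y z = 1 := by rw [hind, if_pos ⟨le_of_lt hzx, hzy⟩]
          simp only [hL, e]
          have := jump_bound hp z
          omega
        · subst hzy
          simp only [hLqy, hindy]
          split_ifs at hPp <;> omega
        · have hL : leftLim (fun u => p u + ind x y u) z = leftLim p z := by
            apply leftLim_comp hp y hzy id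
            intro u h1 h2
            rw [hind, if_neg (fun hc => by linarith [hc.2])]; simp
          have e : ind x y z = 0 := by rw [hind, if_neg (fun hc => by linarith [hc.2])]
          simp only [hL, e]
          have := jump_bound hp z
          omega
lemma Pp_or_Pm {p : ℝ → ℕ} (hp : IsRealPyramid p) (x : ℝ) : Pp p x ∨ Pm p x := by
  unfold Pp Pm
  have hj := jump_bound hp x
  split_ifs with hx
  · have := leftLim_le_of_nonpos hp hx; omega
  · have := le_leftLim_of_pos hp (not_le.mp hx); omega

lemma Pp_congr {q p : ℝ → ℕ} {x : ℝ} (h1 : q x = p x) (h2 : leftLim q x = leftLim p x) :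
    Pp q x ↔ Pp p x := by unfold Pp; rw [h1, h2]

lemma Pm_congr {q p : ℝ → ℕ} {x : ℝ} (h1 : q x = p x) (h2 : leftLim q x = leftLim p x) :
    Pm q x ↔ Pm p x := by unfold Pm; rw [h1, h2]

lemma Pm_shift_down {q p : ℝ → ℕ} {x : ℝ} (h1 : q x + 1 = p x)
    (h2 : leftLim q x = leftLim p x) : Pm q x ↔ Pp p x := by
  unfold Pp Pm; split_ifs <;> omega

lemma Pp_shiftL_down {q p : ℝ → ℕ} {x : ℝ} (h1 : q x = p x)
    (h2 : leftLim q x + 1 = leftLim p x) : Pp q x ↔ Pm p x := by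
  unfold Pp Pm; split_ifs <;> omega

lemma Pm_shiftL_up {q p : ℝ → ℕ} {x : ℝ} (h1 : q x = p x)
    (h2 : leftLim q x = leftLim p x + 1) : Pm q x ↔ Pp p x := by
  unfold Pp Pm; split_ifs <;> omega

lemma Pp_shift_up {q p : ℝ → ℕ} {x : ℝ} (h1 : q x = p x + 1)
    (h2 : leftLim q x = leftLim p x) : Pp q x ↔ Pm p x := by
  unfold Pp Pm; split_ifs <;> omega

section join

variable {p : ℝ → ℕ} {a b c : ℝ}

lemma remA (hp : IsRealPyramid p) (hab : a < b) (hbc : b < c) :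
    (Removable p b c ∧ Removable (fun z => p z - ind b c z) a b) ↔
      (Removable p a c ∧ Pp p b) := by
  have hac := hab.trans hbc
  have e_a : (fun z => p z - ind b c z) a = p a := by
    simp only [ind_apply, Nat.sub_zero, Nat.add_zero, if_neg (fun hc : b ≤ a ∧ a < c => by linarith [hc.1])]
  have eL_a : leftLim (fun z => p z - ind b c z) a = leftLim p a := by
    apply leftLim_comp hp (a - 1) (by linarith) id
    intro z h1 h2
    rw [ind_apply, if_neg (fun hc => by linarith [hc.1])]; simp
  have eL_b : leftLim (fun z => p z - ind b c z) b = leftLim p b := by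
    apply leftLim_comp hp a hab id
    intro z h1 h2
    rw [ind_apply, if_neg (fun hc => by linarith [hc.1])]; simp
  have hq1 : ∀ z, a ≤ z → z < b → p z - ind b c z = p z := by
    intro z h1 h2
    simp only [ind_apply, Nat.sub_zero, Nat.add_zero, if_neg (fun hc : b ≤ z ∧ z < c => by linarith [hc.1])]
  constructor
  · rintro ⟨h1, h2⟩
    have hq1pyr := h1.2
    have h1pb : 1 ≤ p b := h1.1 b ⟨le_rfl, hbc⟩
    have e_b : (fun z => p z - ind b c z) b + 1 = p b := by
      simp only [ind_apply, if_pos (⟨le_rfl, hbc⟩ : b ≤ b ∧ b < c)]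
      omega
    rw [removable_iff hp hbc] at h1
    rw [removable_iff hq1pyr hab] at h2
    have hPb : Pp p b := (Pm_shift_down e_b eL_b).mp h2.2.2
    refine ⟨(removable_iff hp hac).mpr ⟨?_, (Pp_congr e_a eL_a).mp h2.2.1, h1.2.2⟩, hPb⟩
    intro z hz
    rcases lt_or_ge z b with h | h
    · have := h2.1 z ⟨hz.1, h⟩
      rwa [hq1 z hz.1 h] at this
    · exact h1.1 z ⟨h, hz.2⟩
  · rintro ⟨hC, hPb⟩
    rw [removable_iff hp hac] at hC
    have h1pb : 1 ≤ p b := hC.1 b ⟨hab.le, hbc⟩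
    have e_b : (fun z => p z - ind b c z) b + 1 = p b := by
      simp only [ind_apply, if_pos (⟨le_rfl, hbc⟩ : b ≤ b ∧ b < c)]
      omega
    have hR1 : Removable p b c := (removable_iff hp hbc).mpr
      ⟨fun z hz => hC.1 z ⟨le_trans hab.le hz.1, hz.2⟩, hPb, hC.2.2⟩
    refine ⟨hR1, (removable_iff hR1.2 hab).mpr ⟨?_, (Pp_congr e_a eL_a).mpr hC.2.1,
      (Pm_shift_down e_b eL_b).mpr hPb⟩⟩
    intro z hz
    rw [hq1 z hz.1 hz.2]
    exact hC.1 z ⟨hz.1, lt_trans hz.2 hbc⟩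

lemma remB (hp : IsRealPyramid p) (hab : a < b) (hbc : b < c) :
    (Removable p a b ∧ Removable (fun z => p z - ind a b z) b c) ↔
      (Removable p a c ∧ Pm p b) := by
  have hac := hab.trans hbc
  have e_b : (fun z => p z - ind a b z) b = p b := by
    simp only [ind_apply, Nat.sub_zero, Nat.add_zero, if_neg (fun hc : a ≤ b ∧ b < b => lt_irrefl b hc.2)]
  have e_c : (fun z => p z - ind a b z) c = p c := by
    simp only [ind_apply, Nat.sub_zero, Nat.add_zero, if_neg (fun hc : a ≤ c ∧ c < b => by linarith [hc.2])]
  have eL_c : leftLim (fun z => p z - ind a b z) c = leftLim p c := by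
    apply leftLim_comp hp b hbc id
    intro z h1 h2
    rw [ind_apply, if_neg (fun hc => by linarith [hc.2])]; simp
  have eL_b' : leftLim (fun z => p z - ind a b z) b = leftLim p b - 1 := by
    apply leftLim_comp hp a hab (· - 1)
    intro z h1 h2
    rw [ind_apply, if_pos ⟨h1.le, h2⟩]
  have hq2 : ∀ z, b ≤ z → p z - ind a b z = p z := by
    intro z h1
    simp only [ind_apply, Nat.sub_zero, Nat.add_zero, if_neg (fun hc : a ≤ z ∧ z < b => by linarith [hc.2])]
  constructor
  · rintro ⟨h1, h2⟩
    have hq2pyr := h1.2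
    have h1L : 1 ≤ leftLim p b :=
      one_le_leftLim hp hab fun z hz1 hz2 => h1.1 z ⟨hz1.le, hz2⟩
    have eL_b : leftLim (fun z => p z - ind a b z) b + 1 = leftLim p b := by omega
    rw [removable_iff hp hab] at h1
    rw [removable_iff hq2pyr hbc] at h2
    have hPb : Pm p b := (Pp_shiftL_down e_b eL_b).mp h2.2.1
    refine ⟨(removable_iff hp hac).mpr ⟨?_, h1.2.1, (Pm_congr e_c eL_c).mp h2.2.2⟩, hPb⟩
    intro z hz
    rcases lt_or_ge z b with h | h
    · exact h1.1 z ⟨hz.1, h⟩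
    · have := h2.1 z ⟨h, hz.2⟩
      rwa [hq2 z h] at this
  · rintro ⟨hC, hPb⟩
    rw [removable_iff hp hac] at hC
    have h1L : 1 ≤ leftLim p b :=
      one_le_leftLim hp hab fun z hz1 hz2 => hC.1 z ⟨hz1.le, by linarith⟩
    have eL_b : leftLim (fun z => p z - ind a b z) b + 1 = leftLim p b := by omega
    have hR1 : Removable p a b := (removable_iff hp hab).mpr
      ⟨fun z hz => hC.1 z ⟨hz.1, lt_trans hz.2 hbc⟩, hC.2.1, hPb⟩
    refine ⟨hR1, (removable_iff hR1.2 hbc).mpr ⟨?_, (Pp_shiftL_down e_b eL_b).mpr hPb,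
      (Pm_congr e_c eL_c).mpr hC.2.2⟩⟩
    intro z hz
    rw [hq2 z hz.1]
    exact hC.1 z ⟨le_trans hab.le hz.1, hz.2⟩

lemma addA (hp : IsRealPyramid p) (hab : a < b) (hbc : b < c) :
    (Addable p a b ∧ Addable (fun z => p z + ind a b z) b c) ↔
      (Addable p a c ∧ Pp p b) := by
  have hac := hab.trans hbc
  have e_b : (fun z => p z + ind a b z) b = p b := by
    simp only [ind_apply, Nat.sub_zero, Nat.add_zero, if_neg (fun hc : a ≤ b ∧ b < b => lt_irrefl b hc.2)]
  have e_c : (fun z => p z + ind a b z) c = p c := by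
    simp only [ind_apply, Nat.sub_zero, Nat.add_zero, if_neg (fun hc : a ≤ c ∧ c < b => by linarith [hc.2])]
  have eL_c : leftLim (fun z => p z + ind a b z) c = leftLim p c := by
    apply leftLim_comp hp b hbc id
    intro z h1 h2
    rw [ind_apply, if_neg (fun hc => by linarith [hc.2])]; simp
  have eL_b : leftLim (fun z => p z + ind a b z) b = leftLim p b + 1 := by
    apply leftLim_comp hp a hab (· + 1)
    intro z h1 h2
    rw [ind_apply, if_pos ⟨h1.le, h2⟩]
  constructor
  · rintro ⟨h1, h2⟩
    have hq := h1
    rw [addable_iff hp hab] at h1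
    rw [addable_iff hq hbc] at h2
    exact ⟨(addable_iff hp hac).mpr ⟨h1.1, (Pp_congr e_c eL_c).mp h2.2⟩,
      (Pm_shiftL_up e_b eL_b).mp h2.1⟩
  · rintro ⟨hC, hPb⟩
    rw [addable_iff hp hac] at hC
    have hR1 : Addable p a b := (addable_iff hp hab).mpr ⟨hC.1, hPb⟩
    exact ⟨hR1, (addable_iff hR1 hbc).mpr
      ⟨(Pm_shiftL_up e_b eL_b).mpr hPb, (Pp_congr e_c eL_c).mpr hC.2⟩⟩

lemma addB (hp : IsRealPyramid p) (hab : a < b) (hbc : b < c) :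
    (Addable p b c ∧ Addable (fun z => p z + ind b c z) a b) ↔
      (Addable p a c ∧ Pm p b) := by
  have hac := hab.trans hbc
  have e_a : (fun z => p z + ind b c z) a = p a := by
    simp only [ind_apply, Nat.sub_zero, Nat.add_zero, if_neg (fun hc : b ≤ a ∧ a < c => by linarith [hc.1])]
  have e_b : (fun z => p z + ind b c z) b = p b + 1 := by
    simp only [ind_apply, if_pos (⟨le_rfl, hbc⟩ : b ≤ b ∧ b < c)]
  have eL_a : leftLim (fun z => p z + ind b c z) a = leftLim p a := by
    apply leftLim_comp hp (a - 1) (by linarith) id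
    intro z h1 h2
    rw [ind_apply, if_neg (fun hc => by linarith [hc.1])]; simp
  have eL_b : leftLim (fun z => p z + ind b c z) b = leftLim p b := by
    apply leftLim_comp hp a hab id
    intro z h1 h2
    rw [ind_apply, if_neg (fun hc => by linarith [hc.1])]; simp
  constructor
  · rintro ⟨h1, h2⟩
    have hq := h1
    rw [addable_iff hp hbc] at h1
    rw [addable_iff hq hab] at h2
    exact ⟨(addable_iff hp hac).mpr ⟨(Pm_congr e_a eL_a).mp h2.1, h1.2⟩,
      (Pp_shift_up e_b eL_b).mp h2.2⟩
  · rintro ⟨hC, hPb⟩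
    rw [addable_iff hp hac] at hC
    have hR1 : Addable p b c := (addable_iff hp hbc).mpr ⟨hPb, hC.2⟩
    exact ⟨hR1, (addable_iff hR1 hab).mpr
      ⟨(Pm_congr e_a eL_a).mpr hC.1, (Pp_shift_up e_b eL_b).mpr hPb⟩⟩

end join
lemma tK_ne : (tK : K) ≠ 0 := RatFunc.X_ne_zero

lemma nvK_ne : (-vK : K) ≠ 0 := neg_ne_zero.mpr (pow_ne_zero 2 tK_ne)

lemma Esc1 (α β : ℤ) :
    tK * (-tK * (-vK) ^ α * (-tK * (-vK) ^ β)) = -tK * (-vK) ^ (α + β + 1) := by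
  rw [zpow_add₀ nvK_ne, zpow_add₀ nvK_ne, zpow_one]
  generalize (-vK : K) ^ α = A
  generalize (-vK : K) ^ β = B
  rw [show (vK : K) = tK ^ 2 from rfl]
  ring

lemma Esc2 (α β : ℤ) :
    tK⁻¹ * (-tK * (-vK) ^ α * (-tK * (-vK) ^ β)) = tK * (-vK) ^ (α + β) := by
  rw [zpow_add₀ nvK_ne]
  generalize (-vK : K) ^ α = A
  generalize (-vK : K) ^ β = B
  rw [show (tK:K)⁻¹ * (-tK * A * (-tK * B)) = (tK⁻¹ * tK) * (tK * (A * B)) from by ring,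
    inv_mul_cancel₀ tK_ne, one_mul]

lemma Fsc1 (α β : ℤ) :
    tK⁻¹ * (tK * (-vK) ^ α * (tK * (-vK) ^ β)) = tK * (-vK) ^ (α + β) := by
  rw [zpow_add₀ nvK_ne]
  generalize (-vK : K) ^ α = A
  generalize (-vK : K) ^ β = B
  rw [show (tK:K)⁻¹ * (tK * A * (tK * B)) = (tK⁻¹ * tK) * (tK * (A * B)) from by ring,
    inv_mul_cancel₀ tK_ne, one_mul]

lemma Fsc2 (α β : ℤ) :
    tK * (tK * (-vK) ^ α * (tK * (-vK) ^ β)) = -tK * (-vK) ^ (α + β + 1) := by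
  rw [zpow_add₀ nvK_ne, zpow_add₀ nvK_ne, zpow_one]
  generalize (-vK : K) ^ α = A
  generalize (-vK : K) ^ β = B
  rw [show (vK : K) = tK ^ 2 from rfl]
  ring

lemma Eop_single (x y : ℝ) (q : Pyr) (k : K) :
    Eop x y (Finsupp.single q k) = k • Evec x y q := by
  rw [Eop, Finsupp.lsum_single, LinearMap.toSpanSingleton_apply]

lemma Fop_single (x y : ℝ) (q : Pyr) (k : K) :
    Fop x y (Finsupp.single q k) = k • Fvec x y q := by
  rw [Fop, Finsupp.lsum_single, LinearMap.toSpanSingleton_apply]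
lemma key_E {a b c : ℝ} (hab : a < b) (hbc : b < c) (P : Pyr) :
    Evec a c P = tK • (Eop a b (Evec b c P)) - tK⁻¹ • (Eop b c (Evec a b P)) := by
  obtain ⟨p, hp⟩ := P
  have hac := hab.trans hbc
  by_cases hC : Removable p a c
  · rcases Pp_or_Pm hp b with hPb | hPb
    · -- case A : remove [b,c) first, then [a,b)
      obtain ⟨h1, h2⟩ := (remA hp hab hbc).mpr ⟨hC, hPb⟩
      have hnot : ¬ Removable p a b := fun h =>
        Pp_Pm_not_both hPb ((removable_iff hp hab).mp h).2.2
      have hzero : Evec a b ⟨p, hp⟩ = 0 := by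
        simp only [Evec]; rw [dif_neg hnot]
      have hbc1 : Evec b c ⟨p, hp⟩ = Finsupp.single ⟨fun z => p z - ind b c z, h1.2⟩
          (-tK * (-vK) ^ ((p c : ℤ) - (p b : ℤ))) := by
        simp only [Evec]; rw [dif_pos h1]
      have hab1 : Evec a b (⟨fun z => p z - ind b c z, h1.2⟩ : Pyr) =
          Finsupp.single ⟨fun z => p z - ind b c z - ind a b z, h2.2⟩
            (-tK * (-vK) ^ (((p b - ind b c b : ℕ) : ℤ) - ((p a - ind b c a : ℕ) : ℤ))) := by
        simp only [Evec]; rw [dif_pos h2]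
      have hidx : (⟨fun z => p z - ind b c z - ind a b z, h2.2⟩ : Pyr) =
          ⟨fun z => p z - ind a c z, hC.2⟩ :=
        Subtype.ext (funext fun z =>
          show p z - ind b c z - ind a b z = p z - ind a c z by
            rw [ind_split hab hbc z]; omega)
      rw [hzero, map_zero, smul_zero, sub_zero, hbc1]; erw [Eop_single]; rw [hab1]
      erw [Finsupp.smul_single, Finsupp.smul_single]; rw [smul_eq_mul, smul_eq_mul, hidx]
      simp only [Evec]; rw [dif_pos hC]
      refine congrArg _ ?_
      have e1 : ((p b - ind b c b : ℕ) : ℤ) = (p b : ℤ) - 1 := by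
        have h1pb : 1 ≤ p b := hC.1 b ⟨hab.le, hbc⟩
        rw [ind_apply, if_pos (⟨le_rfl, hbc⟩ : b ≤ b ∧ b < c)]; omega
      have e2 : ((p a - ind b c a : ℕ) : ℤ) = (p a : ℤ) := by
        rw [ind_apply, if_neg (fun hcc : b ≤ a ∧ a < c => by linarith [hcc.1])]; omega
      rw [e1, e2, Esc1,
        show ((p c : ℤ) - p b) + ((p b : ℤ) - 1 - p a) + 1 = (p c : ℤ) - p a from by ring]
    · -- case B : remove [a,b) first, then [b,c)
      obtain ⟨h1, h2⟩ := (remB hp hab hbc).mpr ⟨hC, hPb⟩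
      have hnot : ¬ Removable p b c := fun h =>
        Pp_Pm_not_both ((removable_iff hp hbc).mp h).2.1 hPb
      have hzero : Evec b c ⟨p, hp⟩ = 0 := by
        simp only [Evec]; rw [dif_neg hnot]
      have hab1 : Evec a b ⟨p, hp⟩ = Finsupp.single ⟨fun z => p z - ind a b z, h1.2⟩
          (-tK * (-vK) ^ ((p b : ℤ) - (p a : ℤ))) := by
        simp only [Evec]; rw [dif_pos h1]
      have hbc1 : Evec b c (⟨fun z => p z - ind a b z, h1.2⟩ : Pyr) =
          Finsupp.single ⟨fun z => p z - ind a b z - ind b c z, h2.2⟩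
            (-tK * (-vK) ^ (((p c - ind a b c : ℕ) : ℤ) - ((p b - ind a b b : ℕ) : ℤ))) := by
        simp only [Evec]; rw [dif_pos h2]
      have hidx : (⟨fun z => p z - ind a b z - ind b c z, h2.2⟩ : Pyr) =
          ⟨fun z => p z - ind a c z, hC.2⟩ :=
        Subtype.ext (funext fun z =>
          show p z - ind a b z - ind b c z = p z - ind a c z by
            rw [ind_split hab hbc z]; omega)
      rw [hzero, map_zero, smul_zero, zero_sub, hab1]; erw [Eop_single]; rw [hbc1]
      erw [Finsupp.smul_single, Finsupp.smul_single]; rw [smul_eq_mul, smul_eq_mul, hidx]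
      simp only [Evec]; rw [dif_pos hC]
      erw [← Finsupp.single_neg]
      refine congrArg _ ?_
      have e1 : ((p c - ind a b c : ℕ) : ℤ) = (p c : ℤ) := by
        rw [ind_apply, if_neg (fun hcc : a ≤ c ∧ c < b => by linarith [hcc.2])]; omega
      have e2 : ((p b - ind a b b : ℕ) : ℤ) = (p b : ℤ) := by
        rw [ind_apply, if_neg (fun hcc : a ≤ b ∧ b < b => lt_irrefl b hcc.2)]; omega
      rw [e1, e2, Esc2,
        show ((p b : ℤ) - p a) + ((p c : ℤ) - p b) = (p c : ℤ) - p a from by ring, neg_mul]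
  · -- LHS is zero, both RHS terms vanish
    have hz : Evec a c ⟨p, hp⟩ = 0 := by
      simp only [Evec]; rw [dif_neg hC]
    rw [hz]
    have hterm1 : Eop a b (Evec b c ⟨p, hp⟩) = 0 := by
      by_cases hR : Removable p b c
      · have hnot2 : ¬ Removable (fun z => p z - ind b c z) a b := fun h =>
          hC ((remA hp hab hbc).mp ⟨hR, h⟩).1
        have hbc1 : Evec b c ⟨p, hp⟩ = Finsupp.single ⟨fun z => p z - ind b c z, hR.2⟩
            (-tK * (-vK) ^ ((p c : ℤ) - (p b : ℤ))) := by
          simp only [Evec]; rw [dif_pos hR]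
        rw [hbc1]; erw [Eop_single]
        have : Evec a b (⟨fun z => p z - ind b c z, hR.2⟩ : Pyr) = 0 := by
          simp only [Evec]; rw [dif_neg hnot2]
        rw [this, smul_zero]
      · have : Evec b c (⟨p, hp⟩ : Pyr) = 0 := by
          simp only [Evec]; rw [dif_neg hR]
        rw [this, map_zero]
    have hterm2 : Eop b c (Evec a b ⟨p, hp⟩) = 0 := by
      by_cases hR : Removable p a b
      · have hnot2 : ¬ Removable (fun z => p z - ind a b z) b c := fun h =>
          hC ((remB hp hab hbc).mp ⟨hR, h⟩).1
        have hab1 : Evec a b ⟨p, hp⟩ = Finsupp.single ⟨fun z => p z - ind a b z, hR.2⟩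
            (-tK * (-vK) ^ ((p b : ℤ) - (p a : ℤ))) := by
          simp only [Evec]; rw [dif_pos hR]
        rw [hab1]; erw [Eop_single]
        have : Evec b c (⟨fun z => p z - ind a b z, hR.2⟩ : Pyr) = 0 := by
          simp only [Evec]; rw [dif_neg hnot2]
        rw [this, smul_zero]
      · have : Evec a b (⟨p, hp⟩ : Pyr) = 0 := by
          simp only [Evec]; rw [dif_neg hR]
        rw [this, map_zero]
    rw [hterm1, hterm2, smul_zero, smul_zero, sub_zero]
lemma key_F {a b c : ℝ} (hab : a < b) (hbc : b < c) (P : Pyr) :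
    Fvec a c P = tK⁻¹ • (Fop b c (Fvec a b P)) - tK • (Fop a b (Fvec b c P)) := by
  obtain ⟨p, hp⟩ := P
  have hac := hab.trans hbc
  by_cases hC : Addable p a c
  · rcases Pp_or_Pm hp b with hPb | hPb
    · -- case A : add [a,b) first, then [b,c)
      obtain ⟨h1, h2⟩ := (addA hp hab hbc).mpr ⟨hC, hPb⟩
      have hnot : ¬ Addable p b c := fun h =>
        Pp_Pm_not_both hPb ((addable_iff hp hbc).mp h).1
      have hzero : Fvec b c ⟨p, hp⟩ = 0 := by
        simp only [Fvec]; rw [dif_neg hnot]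
      have hab1 : Fvec a b ⟨p, hp⟩ = Finsupp.single ⟨fun z => p z + ind a b z, h1⟩
          (tK * (-vK) ^ ((p a : ℤ) - (p b : ℤ))) := by
        simp only [Fvec]; rw [dif_pos h1]
      have hbc1 : Fvec b c (⟨fun z => p z + ind a b z, h1⟩ : Pyr) =
          Finsupp.single ⟨fun z => p z + ind a b z + ind b c z, h2⟩
            (tK * (-vK) ^ (((p b + ind a b b : ℕ) : ℤ) - ((p c + ind a b c : ℕ) : ℤ))) := by
        simp only [Fvec]; rw [dif_pos h2]
      have hidx : (⟨fun z => p z + ind a b z + ind b c z, h2⟩ : Pyr) =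
          ⟨fun z => p z + ind a c z, hC⟩ :=
        Subtype.ext (funext fun z =>
          show p z + ind a b z + ind b c z = p z + ind a c z by
            rw [ind_split hab hbc z]; omega)
      rw [hzero, map_zero, smul_zero, sub_zero, hab1]; erw [Fop_single]; rw [hbc1]
      erw [Finsupp.smul_single, Finsupp.smul_single]; rw [smul_eq_mul, smul_eq_mul, hidx]
      simp only [Fvec]; rw [dif_pos hC]
      refine congrArg _ ?_
      have e1 : ((p b + ind a b b : ℕ) : ℤ) = (p b : ℤ) := by
        rw [ind_apply, if_neg (fun hcc : a ≤ b ∧ b < b => lt_irrefl b hcc.2)]; omega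
      have e2 : ((p c + ind a b c : ℕ) : ℤ) = (p c : ℤ) := by
        rw [ind_apply, if_neg (fun hcc : a ≤ c ∧ c < b => by linarith [hcc.2])]; omega
      rw [e1, e2, Fsc1,
        show ((p a : ℤ) - p b) + ((p b : ℤ) - p c) = (p a : ℤ) - p c from by ring]
    · -- case B : add [b,c) first, then [a,b)
      obtain ⟨h1, h2⟩ := (addB hp hab hbc).mpr ⟨hC, hPb⟩
      have hnot : ¬ Addable p a b := fun h =>
        Pp_Pm_not_both ((addable_iff hp hab).mp h).2 hPb
      have hzero : Fvec a b ⟨p, hp⟩ = 0 := by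
        simp only [Fvec]; rw [dif_neg hnot]
      have hbc1 : Fvec b c ⟨p, hp⟩ = Finsupp.single ⟨fun z => p z + ind b c z, h1⟩
          (tK * (-vK) ^ ((p b : ℤ) - (p c : ℤ))) := by
        simp only [Fvec]; rw [dif_pos h1]
      have hab1 : Fvec a b (⟨fun z => p z + ind b c z, h1⟩ : Pyr) =
          Finsupp.single ⟨fun z => p z + ind b c z + ind a b z, h2⟩
            (tK * (-vK) ^ (((p a + ind b c a : ℕ) : ℤ) - ((p b + ind b c b : ℕ) : ℤ))) := by
        simp only [Fvec]; rw [dif_pos h2]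
      have hidx : (⟨fun z => p z + ind b c z + ind a b z, h2⟩ : Pyr) =
          ⟨fun z => p z + ind a c z, hC⟩ :=
        Subtype.ext (funext fun z =>
          show p z + ind b c z + ind a b z = p z + ind a c z by
            rw [ind_split hab hbc z]; omega)
      rw [hzero, map_zero, smul_zero, zero_sub, hbc1]; erw [Fop_single]; rw [hab1]
      erw [Finsupp.smul_single, Finsupp.smul_single]; rw [smul_eq_mul, smul_eq_mul, hidx]
      simp only [Fvec]; rw [dif_pos hC]
      erw [← Finsupp.single_neg]
      refine congrArg _ ?_
      have e1 : ((p a + ind b c a : ℕ) : ℤ) = (p a : ℤ) := by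
        rw [ind_apply, if_neg (fun hcc : b ≤ a ∧ a < c => by linarith [hcc.1])]; omega
      have e2 : ((p b + ind b c b : ℕ) : ℤ) = (p b : ℤ) + 1 := by
        rw [ind_apply, if_pos (⟨le_rfl, hbc⟩ : b ≤ b ∧ b < c)]; omega
      rw [e1, e2, Fsc2,
        show ((p b : ℤ) - p c) + ((p a : ℤ) - ((p b : ℤ) + 1)) + 1 = (p a : ℤ) - p c from by
          ring]
      ring
  · have hz : Fvec a c ⟨p, hp⟩ = 0 := by
      simp only [Fvec]; rw [dif_neg hC]
    rw [hz]
    have hterm1 : Fop b c (Fvec a b ⟨p, hp⟩) = 0 := by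
      by_cases hR : Addable p a b
      · have hnot2 : ¬ Addable (fun z => p z + ind a b z) b c := fun h =>
          hC ((addA hp hab hbc).mp ⟨hR, h⟩).1
        have hab1 : Fvec a b ⟨p, hp⟩ = Finsupp.single ⟨fun z => p z + ind a b z, hR⟩
            (tK * (-vK) ^ ((p a : ℤ) - (p b : ℤ))) := by
          simp only [Fvec]; rw [dif_pos hR]
        rw [hab1]; erw [Fop_single]
        have : Fvec b c (⟨fun z => p z + ind a b z, hR⟩ : Pyr) = 0 := by
          simp only [Fvec]; rw [dif_neg hnot2]
        rw [this, smul_zero]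
      · have : Fvec a b (⟨p, hp⟩ : Pyr) = 0 := by
          simp only [Fvec]; rw [dif_neg hR]
        rw [this, map_zero]
    have hterm2 : Fop a b (Fvec b c ⟨p, hp⟩) = 0 := by
      by_cases hR : Addable p b c
      · have hnot2 : ¬ Addable (fun z => p z + ind b c z) a b := fun h =>
          hC ((addB hp hab hbc).mp ⟨hR, h⟩).1
        have hbc1 : Fvec b c ⟨p, hp⟩ = Finsupp.single ⟨fun z => p z + ind b c z, hR⟩
            (tK * (-vK) ^ ((p b : ℤ) - (p c : ℤ))) := by
          simp only [Fvec]; rw [dif_pos hR]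
        rw [hbc1]; erw [Fop_single]
        have : Fvec a b (⟨fun z => p z + ind b c z, hR⟩ : Pyr) = 0 := by
          simp only [Fvec]; rw [dif_neg hnot2]
        rw [this, smul_zero]
      · have : Fvec b c (⟨p, hp⟩ : Pyr) = 0 := by
          simp only [Fvec]; rw [dif_neg hR]
        rw [this, map_zero]
    rw [hterm1, hterm2, smul_zero, smul_zero, sub_zero]
/-- the join relations
`E_{[a,c)} = t·E_{[a,b)}∘E_{[b,c)} − t⁻¹·E_{[b,c)}∘E_{[a,b)}` and
`F_{[a,c)} = t⁻¹·F_{[b,c)}∘F_{[a,b)} − t·F_{[a,b)}∘F_{[b,c)}` hold on the Fock space. -/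
theorem fock_join_relations (a b c : ℝ) (hab : a < b) (hbc : b < c) :
    Eop a c = tK • (Eop a b ∘ₗ Eop b c) - tK⁻¹ • (Eop b c ∘ₗ Eop a b) ∧
    Fop a c = tK⁻¹ • (Fop b c ∘ₗ Fop a b) - tK • (Fop a b ∘ₗ Fop b c) := by
  constructor
  · apply Finsupp.lhom_ext
    intro P k
    simp only [LinearMap.sub_apply, LinearMap.smul_apply, LinearMap.comp_apply]
    rw [Eop_single, Eop_single, Eop_single, map_smul, map_smul, key_E hab hbc P,
      smul_sub, smul_comm k tK, smul_comm k tK⁻¹]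
  · apply Finsupp.lhom_ext
    intro P k
    simp only [LinearMap.sub_apply, LinearMap.smul_apply, LinearMap.comp_apply]
    rw [Fop_single, Fop_single, Fop_single, map_smul, map_smul, key_F hab hbc P,
      smul_sub, smul_comm k tK, smul_comm k tK⁻¹]
end
end

section
/- For all real intervals J₁ and J₂ whose closures are disjoint, the operators on the Fock space 𝓕 satisfy E_{J₁} ∘ E_{J₂} = E_{J₂} ∘ E_{J₁} and F_{J₁} ∘ F_{J₂} = F_{J₂} ∘ F_{J₁} as K-linear endomorphisms of 𝓕. -/
noncomputable section
open Function
open scoped Classical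

/-! ### Auxiliary lemmas -/

lemma ind_of_not_mem {a b x : ℝ} (h : x ∉ Set.Ico a b) : ind a b x = 0 := by
  simp [ind, Set.indicator_of_notMem h]

/-- On a ℕ-valued function with finitely many discontinuities, the function is constant on
some interval `(c, x)` to the left of any point `x`. -/
lemma exists_left_const (g : ℝ → ℕ) (hfin : {x : ℝ | ¬ ContinuousAt g x}.Finite) (x : ℝ) :
    ∃ c, c < x ∧ ∃ v, ∀ y ∈ Set.Ioo c x, g y = v := by
  classical
  set T : Finset ℝ := insert (x - 1) (hfin.toFinset.filter (· < x)) with hT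
  have hne : T.Nonempty := ⟨x - 1, Finset.mem_insert_self _ _⟩
  set c := T.max' hne with hcdef
  have hcx : c < x := by
    rw [hcdef, Finset.max'_lt_iff]
    intro y hy
    rcases Finset.mem_insert.1 hy with rfl | hy
    · linarith
    · exact (Finset.mem_filter.1 hy).2
  have hcont : ∀ y ∈ Set.Ioo c x, ContinuousAt g y := by
    intro y hy
    by_contra hnc
    have : y ∈ T := Finset.mem_insert_of_mem
      (Finset.mem_filter.2 ⟨hfin.mem_toFinset.2 hnc, hy.2⟩)
    exact absurd (Finset.le_max' T y this) (not_le.2 hy.1)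
  have hmid : (c + x) / 2 ∈ Set.Ioo c x := ⟨by linarith, by linarith⟩
  refine ⟨c, hcx, g ((c + x) / 2), fun y hy => ?_⟩
  exact (isPreconnected_Ioo (a := c) (b := x)).constant
    (fun z hz => (hcont z hz).continuousWithinAt) hy hmid

lemma leftLim_eq_const {g : ℝ → ℕ} {c x : ℝ} (hcx : c < x) {v : ℕ}
    (hv : ∀ y ∈ Set.Ioo c x, g y = v) : Function.leftLim g x = v := by
  have hne : (nhdsWithin x (Set.Iio x)).NeBot := inferInstance
  refine leftLim_eq_of_tendsto ?_
  refine Filter.Tendsto.congr' ?_ tendsto_const_nhds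
  filter_upwards [Ioo_mem_nhdsLT_of_mem (Set.mem_Ioc.2 ⟨hcx, le_refl x⟩)] with y hy
  exact (hv y hy).symm

/-- The key gluing lemma: if `f` agrees with a pyramid `g` on `(-∞, c₂)` and with a pyramid
`h` on `[c₁, ∞)` where `c₁ < c₂`, then `f` is a pyramid. -/
lemma isRealPyramid_glue (f g h : ℝ → ℕ) (c₁ c₂ : ℝ) (hc : c₁ < c₂)
    (hg : IsRealPyramid g) (hh : IsRealPyramid h)
    (hfg : ∀ x, x < c₂ → f x = g x) (hfh : ∀ x, c₁ ≤ x → f x = h x) :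
    IsRealPyramid f := by
  obtain ⟨⟨Mg, hMg⟩, hg0, hgmono, hganti, hgrc, hgfin, hgjump⟩ := hg
  obtain ⟨⟨Mh, hMh⟩, hh0, hhmono, hhanti, hhrc, hhfin, hhjump⟩ := hh
  have hgh : g c₁ = h c₁ := by rw [← hfg c₁ hc, hfh c₁ le_rfl]
  refine ⟨⟨max Mg Mh, fun x hx => ?_⟩, ?_, ?_, ?_, ?_, ?_, ?_⟩
  · rcases lt_or_ge x c₂ with hx2 | hx2
    · rw [hfg x hx2]; exact hMg x (le_trans (le_max_left _ _) hx)
    · rw [hfh x (hc.le.trans hx2)]; exact hMh x (le_trans (le_max_right _ _) hx)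
  · intro x
    rcases le_or_gt c₂ 0 with h0 | h0
    · rw [hfh 0 (hc.le.trans h0)]
      rcases le_or_gt c₁ x with hx1 | hx1
      · rw [hfh x hx1]; exact hh0 x
      · rw [hfg x (hx1.trans hc)]
        calc g x ≤ g c₁ := hgmono hx1.le (hc.le.trans h0)
          _ = h c₁ := hgh
          _ ≤ h 0 := hh0 c₁
    · rw [hfg 0 h0]
      rcases lt_or_ge x c₂ with hx2 | hx2
      · rw [hfg x hx2]; exact hg0 x
      · rw [hfh x (hc.le.trans hx2)]
        rcases le_or_gt c₁ 0 with h01 | h01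
        · have hgh0 : g 0 = h 0 := by rw [← hfg 0 h0, hfh 0 h01]
          rw [hgh0]; exact hh0 x
        · calc h x ≤ h c₁ := hhanti h01.le (hc.le.trans hx2)
            _ = g c₁ := hgh.symm
            _ ≤ g 0 := hganti le_rfl h01.le
  · intro x y hxy hy0
    rcases le_or_gt c₁ x with hx1 | hx1
    · rw [hfh x hx1, hfh y (hx1.trans hxy)]; exact hhmono hxy hy0
    · rcases lt_or_ge y c₂ with hy2 | hy2
      · rw [hfg x (hxy.trans_lt hy2), hfg y hy2]; exact hgmono hxy hy0
      · rw [hfg x (hx1.trans hc), hfh y (hc.le.trans hy2)]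
        calc g x ≤ g c₁ := hgmono hx1.le (le_trans (hc.le.trans hy2) hy0)
          _ = h c₁ := hgh
          _ ≤ h y := hhmono (hc.le.trans hy2) hy0
  · intro x y hx0 hxy
    rcases lt_or_ge y c₂ with hy2 | hy2
    · rw [hfg x (lt_of_le_of_lt hxy hy2), hfg y hy2]; exact hganti hx0 hxy
    · rcases le_or_gt c₁ x with hx1 | hx1
      · rw [hfh x hx1, hfh y (hx1.trans hxy)]; exact hhanti hx0 hxy
      · rw [hfg x (hx1.trans hc), hfh y (hc.le.trans hy2)]
        calc h y ≤ h c₁ := hhanti (hx0.trans hx1.le) (hc.le.trans hy2)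
          _ = g c₁ := hgh.symm
          _ ≤ g x := hganti hx0 hx1.le
  · intro x
    rcases lt_or_ge x c₂ with hx2 | hx2
    · refine (hgrc x).congr_of_eventuallyEq ?_ (hfg x hx2)
      filter_upwards [mem_nhdsWithin_of_mem_nhds (Iio_mem_nhds hx2)] with y hy
      exact hfg y hy
    · have hx1 : c₁ < x := hc.trans_le hx2
      refine (hhrc x).congr_of_eventuallyEq ?_ (hfh x hx1.le)
      filter_upwards [self_mem_nhdsWithin] with y hy
      exact hfh y (hx1.le.trans hy)
  · refine (hgfin.union hhfin).subset fun x hx => ?_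
    rcases lt_or_ge x c₂ with hx2 | hx2
    · refine Or.inl fun hcont => hx (hcont.congr ?_)
      filter_upwards [Iio_mem_nhds hx2] with y hy
      exact (hfg y hy).symm
    · refine Or.inr fun hcont => hx (hcont.congr ?_)
      filter_upwards [Ioi_mem_nhds (hc.trans_le hx2)] with y hy
      exact (hfh y hy.le).symm
  · intro x
    rcases lt_or_ge x c₂ with hx2 | hx2
    · obtain ⟨c, hcx, v, hv⟩ := exists_left_const g hgfin x
      have e1 : Function.leftLim g x = v := leftLim_eq_const hcx hv
      have e2 : Function.leftLim f x = v :=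
        leftLim_eq_const hcx fun y hy => (hfg y (hy.2.trans hx2)).trans (hv y hy)
      rw [hfg x hx2, e2, ← e1]; exact hgjump x
    · have hx1 : c₁ < x := hc.trans_le hx2
      obtain ⟨c, hcx, v, hv⟩ := exists_left_const h hhfin x
      have hcx' : max c c₁ < x := max_lt hcx hx1
      have e1 : Function.leftLim h x = v := leftLim_eq_const hcx hv
      have e2 : Function.leftLim f x = v := by
        refine leftLim_eq_const hcx' fun y hy => ?_
        have hy1 : c₁ < y := lt_of_le_of_lt (le_max_right c c₁) hy.1
        have hyc : c < y := lt_of_le_of_lt (le_max_left c c₁) hy.1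
        exact (hfh y hy1.le).trans (hv y ⟨hyc, hy.2⟩)
      rw [hfh x hx1.le, e2, ← e1]; exact hhjump x

lemma sub_pyramid {a₁ b₁ a₂ b₂ : ℝ} (hord : b₁ < a₂ ∨ b₂ < a₁) {p : ℝ → ℕ}
    (hp : IsRealPyramid p)
    (hq : IsRealPyramid fun x => p x - ind a₁ b₁ x - ind a₂ b₂ x) :
    IsRealPyramid fun x => p x - ind a₁ b₁ x := by
  rcases hord with hord | hord
  · refine isRealPyramid_glue _ _ _ b₁ a₂ hord hq hp (fun x hx => ?_) (fun x hx => ?_)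
    · have hz : ind a₂ b₂ x = 0 := ind_of_not_mem fun hm => absurd hm.1 (not_le.2 hx)
      simp [hz]
    · have hz : ind a₁ b₁ x = 0 := ind_of_not_mem fun hm => absurd hm.2 (not_lt.2 hx)
      simp [hz]
  · refine isRealPyramid_glue _ _ _ b₂ a₁ hord hp hq (fun x hx => ?_) (fun x hx => ?_)
    · have hz : ind a₁ b₁ x = 0 := ind_of_not_mem fun hm => absurd hm.1 (not_le.2 hx)
      simp [hz]
    · have hz : ind a₂ b₂ x = 0 := ind_of_not_mem fun hm => absurd hm.2 (not_lt.2 hx)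
      simp [hz]

lemma add_pyramid {a₁ b₁ a₂ b₂ : ℝ} (hord : b₁ < a₂ ∨ b₂ < a₁) {p : ℝ → ℕ}
    (hp : IsRealPyramid p)
    (hq : IsRealPyramid fun x => p x + ind a₁ b₁ x + ind a₂ b₂ x) :
    IsRealPyramid fun x => p x + ind a₁ b₁ x := by
  rcases hord with hord | hord
  · refine isRealPyramid_glue _ _ _ b₁ a₂ hord hq hp (fun x hx => ?_) (fun x hx => ?_)
    · have hz : ind a₂ b₂ x = 0 := ind_of_not_mem fun hm => absurd hm.1 (not_le.2 hx)
      simp [hz]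
    · have hz : ind a₁ b₁ x = 0 := ind_of_not_mem fun hm => absurd hm.2 (not_lt.2 hx)
      simp [hz]
  · refine isRealPyramid_glue _ _ _ b₂ a₁ hord hp hq (fun x hx => ?_) (fun x hx => ?_)
    · have hz : ind a₁ b₁ x = 0 := ind_of_not_mem fun hm => absurd hm.1 (not_le.2 hx)
      simp [hz]
    · have hz : ind a₂ b₂ x = 0 := ind_of_not_mem fun hm => absurd hm.2 (not_lt.2 hx)
      simp [hz]

lemma rem_forward (a₁ b₁ a₂ b₂ : ℝ) (hord : b₁ < a₂ ∨ b₂ < a₁) (p : ℝ → ℕ)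
    (hp : IsRealPyramid p) (h2 : Removable p a₂ b₂)
    (h12 : Removable (fun x => p x - ind a₂ b₂ x) a₁ b₁) :
    Removable p a₁ b₁ ∧ Removable (fun x => p x - ind a₁ b₁ x) a₂ b₂ := by
  have hq : IsRealPyramid fun x => p x - ind a₁ b₁ x - ind a₂ b₂ x := by
    have h : IsRealPyramid fun x => p x - ind a₂ b₂ x - ind a₁ b₁ x := h12.2
    have heq : (fun x => p x - ind a₂ b₂ x - ind a₁ b₁ x)
        = fun x => p x - ind a₁ b₁ x - ind a₂ b₂ x := funext fun x => by omega
    rwa [heq] at h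
  have hdis : ∀ x ∈ Set.Ico a₂ b₂, ind a₁ b₁ x = 0 := by
    intro x hx
    refine ind_of_not_mem fun hm => ?_
    rcases hord with h | h
    · have := hm.2; have := hx.1; linarith
    · have := hm.1; have := hx.2; linarith
  refine ⟨⟨fun x hx => ?_, sub_pyramid hord hp hq⟩, ⟨fun x hx => ?_, hq⟩⟩
  · have hb : 1 ≤ p x - ind a₂ b₂ x := h12.1 x hx
    omega
  · show 1 ≤ p x - ind a₁ b₁ x
    have hz := hdis x hx
    have := h2.1 x hx
    omega

lemma add_forward (a₁ b₁ a₂ b₂ : ℝ) (hord : b₁ < a₂ ∨ b₂ < a₁) (p : ℝ → ℕ)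
    (hp : IsRealPyramid p) (h2 : Addable p a₂ b₂)
    (h12 : Addable (fun x => p x + ind a₂ b₂ x) a₁ b₁) :
    Addable p a₁ b₁ ∧ Addable (fun x => p x + ind a₁ b₁ x) a₂ b₂ := by
  have hq : IsRealPyramid fun x => p x + ind a₁ b₁ x + ind a₂ b₂ x := by
    have h : IsRealPyramid fun x => p x + ind a₂ b₂ x + ind a₁ b₁ x := h12
    have heq : (fun x => p x + ind a₂ b₂ x + ind a₁ b₁ x)
        = fun x => p x + ind a₁ b₁ x + ind a₂ b₂ x := funext fun x => by omega
    rwa [heq] at h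
  exact ⟨add_pyramid hord hp hq, hq⟩

lemma Evec_pos {a b : ℝ} {p : Pyr} (h : Removable p.1 a b) :
    Evec a b p = Finsupp.single (⟨fun x => p.1 x - ind a b x, h.2⟩ : Pyr)
      (-tK * (-vK) ^ ((p.1 b : ℤ) - (p.1 a : ℤ))) := dif_pos h

lemma Evec_neg {a b : ℝ} {p : Pyr} (h : ¬ Removable p.1 a b) : Evec a b p = 0 := dif_neg h

lemma Fvec_pos {a b : ℝ} {p : Pyr} (h : Addable p.1 a b) :
    Fvec a b p = Finsupp.single (⟨fun x => p.1 x + ind a b x, h⟩ : Pyr)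
      (tK * (-vK) ^ ((p.1 a : ℤ) - (p.1 b : ℤ))) := dif_pos h

lemma Fvec_neg {a b : ℝ} {p : Pyr} (h : ¬ Addable p.1 a b) : Fvec a b p = 0 := dif_neg h

lemma Eop_single_s14 (a b : ℝ) (p : Pyr) (c : K) :
    Eop a b (Finsupp.single p c) = c • Evec a b p := by
  simp only [Eop, Finsupp.lsum_single, LinearMap.toSpanSingleton_apply]

lemma Fop_single_s14 (a b : ℝ) (p : Pyr) (c : K) :
    Fop a b (Finsupp.single p c) = c • Fvec a b p := by
  simp only [Fop, Finsupp.lsum_single, LinearMap.toSpanSingleton_apply]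

lemma single_helper {A B : Pyr} (h : A.1 = B.1) {k l : K} (hk : k = l) :
    (Finsupp.single A k : Fock) = Finsupp.single B l := by
  subst hk
  exact congrArg (fun q : Pyr => (Finsupp.single q k : Fock)) (Subtype.ext h)

lemma Evec_comm (a₁ b₁ a₂ b₂ : ℝ) (h₁ : a₁ < b₁) (h₂ : a₂ < b₂)
    (hord : b₁ < a₂ ∨ b₂ < a₁) (p : Pyr) :
    Eop a₁ b₁ (Evec a₂ b₂ p) = Eop a₂ b₂ (Evec a₁ b₁ p) := by
  have za₁ : ind a₂ b₂ a₁ = 0 := ind_of_not_mem (by rintro ⟨u, v⟩; rcases hord with h | h <;> linarith)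
  have zb₁ : ind a₂ b₂ b₁ = 0 := ind_of_not_mem (by rintro ⟨u, v⟩; rcases hord with h | h <;> linarith)
  have za₂ : ind a₁ b₁ a₂ = 0 := ind_of_not_mem (by rintro ⟨u, v⟩; rcases hord with h | h <;> linarith)
  have zb₂ : ind a₁ b₁ b₂ = 0 := ind_of_not_mem (by rintro ⟨u, v⟩; rcases hord with h | h <;> linarith)
  by_cases h2 : Removable p.1 a₂ b₂
  · by_cases h12 : Removable (fun x => p.1 x - ind a₂ b₂ x) a₁ b₁
    · obtain ⟨h1, h21⟩ := rem_forward a₁ b₁ a₂ b₂ hord p.1 p.2 h2 h12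
      erw [Evec_pos h2, Eop_single_s14, Evec_pos h1, Eop_single_s14,
        Evec_pos (p := ⟨_, h2.2⟩) h12, Evec_pos (p := ⟨_, h1.2⟩) h21,
        Finsupp.smul_single, Finsupp.smul_single, smul_eq_mul, smul_eq_mul]
      refine single_helper ?_ ?_
      · funext x
        show p.1 x - ind a₂ b₂ x - ind a₁ b₁ x = p.1 x - ind a₁ b₁ x - ind a₂ b₂ x
        omega
      · show (-tK * (-vK) ^ ((p.1 b₂ : ℤ) - (p.1 a₂ : ℤ))) *
            (-tK * (-vK) ^ (((p.1 b₁ - ind a₂ b₂ b₁ : ℕ) : ℤ) - ((p.1 a₁ - ind a₂ b₂ a₁ : ℕ) : ℤ)))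
          = (-tK * (-vK) ^ ((p.1 b₁ : ℤ) - (p.1 a₁ : ℤ))) *
            (-tK * (-vK) ^ (((p.1 b₂ - ind a₁ b₁ b₂ : ℕ) : ℤ) - ((p.1 a₂ - ind a₁ b₁ a₂ : ℕ) : ℤ)))
        rw [za₁, zb₁, za₂, zb₂]
        simp only [Nat.sub_zero]
        ring
    · erw [Evec_pos h2, Eop_single_s14, Evec_neg h12, smul_zero]
      by_cases h1 : Removable p.1 a₁ b₁
      · have h21 : ¬ Removable (fun x => p.1 x - ind a₁ b₁ x) a₂ b₂ := fun hc =>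
          h12 (rem_forward a₂ b₂ a₁ b₁ hord.symm p.1 p.2 h1 hc).2
        erw [Evec_pos h1, Eop_single_s14, Evec_neg h21, smul_zero]
      · rw [Evec_neg h1, map_zero]
  · by_cases h1 : Removable p.1 a₁ b₁
    · have h21 : ¬ Removable (fun x => p.1 x - ind a₁ b₁ x) a₂ b₂ := fun hc =>
        h2 (rem_forward a₂ b₂ a₁ b₁ hord.symm p.1 p.2 h1 hc).1
      erw [Evec_neg h2, map_zero, Evec_pos h1, Eop_single_s14, Evec_neg h21, smul_zero]
    · rw [Evec_neg h2, Evec_neg h1, map_zero, map_zero]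

lemma Fvec_comm (a₁ b₁ a₂ b₂ : ℝ) (h₁ : a₁ < b₁) (h₂ : a₂ < b₂)
    (hord : b₁ < a₂ ∨ b₂ < a₁) (p : Pyr) :
    Fop a₁ b₁ (Fvec a₂ b₂ p) = Fop a₂ b₂ (Fvec a₁ b₁ p) := by
  have za₁ : ind a₂ b₂ a₁ = 0 := ind_of_not_mem (by rintro ⟨u, v⟩; rcases hord with h | h <;> linarith)
  have zb₁ : ind a₂ b₂ b₁ = 0 := ind_of_not_mem (by rintro ⟨u, v⟩; rcases hord with h | h <;> linarith)
  have za₂ : ind a₁ b₁ a₂ = 0 := ind_of_not_mem (by rintro ⟨u, v⟩; rcases hord with h | h <;> linarith)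
  have zb₂ : ind a₁ b₁ b₂ = 0 := ind_of_not_mem (by rintro ⟨u, v⟩; rcases hord with h | h <;> linarith)
  by_cases h2 : Addable p.1 a₂ b₂
  · by_cases h12 : Addable (fun x => p.1 x + ind a₂ b₂ x) a₁ b₁
    · obtain ⟨h1, h21⟩ := add_forward a₁ b₁ a₂ b₂ hord p.1 p.2 h2 h12
      erw [Fvec_pos h2, Fop_single_s14, Fvec_pos h1, Fop_single_s14,
        Fvec_pos (p := ⟨_, h2⟩) h12, Fvec_pos (p := ⟨_, h1⟩) h21,
        Finsupp.smul_single, Finsupp.smul_single, smul_eq_mul, smul_eq_mul]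
      refine single_helper ?_ ?_
      · funext x
        show p.1 x + ind a₂ b₂ x + ind a₁ b₁ x = p.1 x + ind a₁ b₁ x + ind a₂ b₂ x
        omega
      · show (tK * (-vK) ^ ((p.1 a₂ : ℤ) - (p.1 b₂ : ℤ))) *
            (tK * (-vK) ^ (((p.1 a₁ + ind a₂ b₂ a₁ : ℕ) : ℤ) - ((p.1 b₁ + ind a₂ b₂ b₁ : ℕ) : ℤ)))
          = (tK * (-vK) ^ ((p.1 a₁ : ℤ) - (p.1 b₁ : ℤ))) *
            (tK * (-vK) ^ (((p.1 a₂ + ind a₁ b₁ a₂ : ℕ) : ℤ) - ((p.1 b₂ + ind a₁ b₁ b₂ : ℕ) : ℤ)))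
        rw [za₁, zb₁, za₂, zb₂]
        simp only [Nat.add_zero]
        ring
    · erw [Fvec_pos h2, Fop_single_s14, Fvec_neg h12, smul_zero]
      by_cases h1 : Addable p.1 a₁ b₁
      · have h21 : ¬ Addable (fun x => p.1 x + ind a₁ b₁ x) a₂ b₂ := fun hc =>
          h12 (add_forward a₂ b₂ a₁ b₁ hord.symm p.1 p.2 h1 hc).2
        erw [Fvec_pos h1, Fop_single_s14, Fvec_neg h21, smul_zero]
      · rw [Fvec_neg h1, map_zero]
  · by_cases h1 : Addable p.1 a₁ b₁
    · have h21 : ¬ Addable (fun x => p.1 x + ind a₁ b₁ x) a₂ b₂ := fun hc =>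
        h2 (add_forward a₂ b₂ a₁ b₁ hord.symm p.1 p.2 h1 hc).1
      erw [Fvec_neg h2, map_zero, Fvec_pos h1, Fop_single_s14, Fvec_neg h21, smul_zero]
    · rw [Fvec_neg h2, Fvec_neg h1, map_zero, map_zero]

/-- if the closures of `J₁ = [a₁,b₁)` and `J₂ = [a₂,b₂)` are disjoint, then
`E_{J₁}, E_{J₂}` commute and `F_{J₁}, F_{J₂}` commute on the Fock space. -/
theorem fock_nest_disjoint_commute (a₁ b₁ a₂ b₂ : ℝ) (h₁ : a₁ < b₁) (h₂ : a₂ < b₂)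
    (hdisj : Set.Icc a₁ b₁ ∩ Set.Icc a₂ b₂ = ∅) :
    Eop a₁ b₁ ∘ₗ Eop a₂ b₂ = Eop a₂ b₂ ∘ₗ Eop a₁ b₁ ∧
    Fop a₁ b₁ ∘ₗ Fop a₂ b₂ = Fop a₂ b₂ ∘ₗ Fop a₁ b₁ := by
  have hord : b₁ < a₂ ∨ b₂ < a₁ := by
    by_contra hcon
    push_neg at hcon
    have hm : max a₁ a₂ ∈ Set.Icc a₁ b₁ ∩ Set.Icc a₂ b₂ :=
      ⟨⟨le_max_left _ _, max_le h₁.le hcon.1⟩, ⟨le_max_right _ _, max_le hcon.2 h₂.le⟩⟩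
    rw [hdisj] at hm
    exact hm
  constructor
  · refine Finsupp.lhom_ext fun p c => ?_
    simp only [LinearMap.comp_apply]
    rw [Eop_single_s14, map_smul, Eop_single_s14, map_smul, Evec_comm a₁ b₁ a₂ b₂ h₁ h₂ hord p]
  · refine Finsupp.lhom_ext fun p c => ?_
    simp only [LinearMap.comp_apply]
    rw [Fop_single_s14, map_smul, Fop_single_s14, map_smul, Fvec_comm a₁ b₁ a₂ b₂ h₁ h₂ hord p]
end
end
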